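/- In the linear order of infinite decimal expansions (formal series d = ±Σ_{n≤k} d_n·10^n with digits in {0,...,9}, not eventually all 9, and not negative zero), every nonempty set bounded from above has a supremum. -/

import Mathlib

/-- An infinite decimal expansion `±Σ_{n≤k} d_n·10^n`: an optional minus sign,
an order `k ∈ ℕ₀`, digits `d_n ∈ {0,…,9}` (zero above the order, leading digit
nonzero unless `k = 0`), no infinite tail of 9s, and `-0` excluded. -/
structure Decimal where
  neg : Bool
  k : ℕ
  digits : ℤ → Fin 10
  digits_above : ∀ n : ℤ, (k : ℤ) < n → digits n = 0
  leading : digits k ≠ 0 ∨ k = 0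
  no_nine_tail : ∀ n : ℤ, ∃ m : ℤ, m ≤ n ∧ digits m ≠ 9
  no_neg_zero : neg = true → ∃ n : ℤ, digits n ≠ 0

/-- The lexicographic-on-digits order `<_R` on decimals, with signs treated
in the usual way. -/
def Decimal.lt (d e : Decimal) : Prop :=
  (d.neg = true ∧ e.neg = false) ∨
  (d.neg = false ∧ e.neg = false ∧
    ∃ i : ℤ, d.digits i < e.digits i ∧ ∀ j : ℤ, i < j → d.digits j = e.digits j) ∨
  (d.neg = true ∧ e.neg = true ∧
    ∃ i : ℤ, e.digits i < d.digits i ∧ ∀ j : ℤ, i < j → d.digits j = e.digits j)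

namespace Decimal

noncomputable def term (d : Decimal) (n : ℤ) : ℝ := (d.digits n : ℝ) * (10:ℝ) ^ n

lemma term_nonneg (d : Decimal) (n : ℤ) : 0 ≤ d.term n := by
  unfold term; positivity

lemma term_le (d : Decimal) (n : ℤ) : d.term n ≤ 9 * (10:ℝ) ^ n := by
  unfold term
  have h : (d.digits n : ℝ) ≤ 9 := by
    have := (d.digits n).is_lt
    have : (d.digits n : ℕ) ≤ 9 := by omega
    exact_mod_cast this
  have : (0:ℝ) < (10:ℝ)^n := by positivity
  nlinarith

lemma summable_tail (d : Decimal) (i : ℤ) :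
    Summable (fun j : ℕ => d.term (i - j)) := by
  apply Summable.of_nonneg_of_le (fun j => d.term_nonneg _)
    (f := fun j : ℕ => (9 * (10:ℝ)^i) * (1/10)^j)
  · intro j
    have : d.term (i - j) ≤ 9 * (10:ℝ)^(i - (j:ℤ)) := d.term_le _
    rw [zpow_sub₀ (by norm_num : (10:ℝ) ≠ 0)] at this
    calc d.term (i - j) ≤ 9 * ((10:ℝ)^i / (10:ℝ)^(j:ℤ)) := this
      _ = (9 * (10:ℝ)^i) * (1/10)^j := by
          rw [zpow_natCast, one_div, inv_pow]
          ring
  · exact (summable_geometric_of_lt_one (by norm_num) (by norm_num)).mul_left _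

noncomputable def tail (d : Decimal) (i : ℤ) : ℝ := ∑' j : ℕ, d.term (i - j)

lemma tail_nonneg (d : Decimal) (i : ℤ) : 0 ≤ d.tail i :=
  tsum_nonneg (fun j => d.term_nonneg _)

lemma tail_succ (d : Decimal) (i : ℤ) : d.tail i = d.term i + d.tail (i - 1) := by
  unfold tail
  rw [Summable.tsum_eq_zero_add (d.summable_tail i)]
  congr 1
  · norm_num
  · apply tsum_congr; intro j; congr 1; push_cast; ring

lemma tail_le_term (d : Decimal) (i : ℤ) (j : ℕ) : d.term (i - j) ≤ d.tail i :=
  Summable.le_tsum (d.summable_tail i) j (fun _ _ => d.term_nonneg _)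

lemma tail_lt (d : Decimal) (i : ℤ) : d.tail i < (10:ℝ) ^ (i + 1) := by
  obtain ⟨m, hm, hm9⟩ := d.no_nine_tail i
  set j0 : ℕ := (i - m).toNat with hj0
  have hij : i - (j0:ℤ) = m := by omega
  have key : d.tail i < ∑' j : ℕ, (9 * (10:ℝ)^i) * (1/10)^j := by
    apply Summable.tsum_lt_tsum (i := j0)
    · intro j
      have : d.term (i - j) ≤ 9 * (10:ℝ)^(i - (j:ℤ)) := d.term_le _
      rw [zpow_sub₀ (by norm_num : (10:ℝ) ≠ 0)] at this
      calc d.term (i - j) ≤ 9 * ((10:ℝ)^i / (10:ℝ)^(j:ℤ)) := this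
        _ = (9 * (10:ℝ)^i) * (1/10)^j := by rw [zpow_natCast, one_div, inv_pow]; ring
    · rw [hij]
      have hd : (d.digits m : ℝ) < 9 := by
        have h1 := (d.digits m).is_lt
        have h2 : (d.digits m : ℕ) ≠ 9 := by simpa [Fin.ext_iff] using hm9
        have : (d.digits m : ℕ) < 9 := by omega
        exact_mod_cast this
      unfold term
      have hp : (0:ℝ) < (10:ℝ)^m := by positivity
      have : (9 * (10:ℝ)^i) * (1/10)^j0 = 9 * (10:ℝ)^m := by
        rw [← hij]
        rw [zpow_sub₀ (by norm_num : (10:ℝ) ≠ 0), zpow_natCast, one_div, inv_pow]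
        ring
      rw [this]
      nlinarith
    · exact d.summable_tail i
    · exact (summable_geometric_of_lt_one (by norm_num) (by norm_num)).mul_left _
  have : ∑' j : ℕ, (9 * (10:ℝ)^i) * (1/10)^j = (10:ℝ)^(i+1) := by
    rw [tsum_mul_left, tsum_geometric_of_lt_one (by norm_num) (by norm_num)]
    rw [zpow_add_one₀ (by norm_num : (10:ℝ) ≠ 0)]
    ring
  linarith [key, this.le, this.ge]

noncomputable def posval (d : Decimal) : ℝ := d.tail d.k

noncomputable def val (d : Decimal) : ℝ := if d.neg then -d.posval else d.posval

lemma tail_eq_of_ge (d : Decimal) {i : ℤ} (hi : (d.k:ℤ) ≤ i) : d.tail i = d.posval := by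
  refine Int.le_induction (motive := fun i _ => d.tail i = d.posval) rfl ?_ i hi
  intro i hi ih
  show d.tail (i+1) = d.posval
  have hd : d.digits (i+1) = 0 := d.digits_above _ (by omega)
  have h0 : d.term (i+1) = 0 := by unfold term; rw [hd]; simp
  rw [tail_succ, h0, zero_add, show i + 1 - 1 = i by ring, ih]

lemma posval_nonneg (d : Decimal) : 0 ≤ d.posval := d.tail_nonneg _

lemma posval_pos (d : Decimal) {n : ℤ} (hn : d.digits n ≠ 0) : 0 < d.posval := by
  have hnk : n ≤ (d.k:ℤ) := by
    by_contra h
    exact hn (d.digits_above n (by omega))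
  have h1 : (1:ℝ) ≤ (d.digits n : ℝ) := by
    have : 1 ≤ (d.digits n : ℕ) := by
      rcases Nat.eq_zero_or_pos (d.digits n : ℕ) with h | h
      · exact absurd (Fin.ext (by simp [h])) hn
      · exact h
    exact_mod_cast this
  have h2 : (10:ℝ)^n ≤ d.term n := by
    unfold term; nlinarith [zpow_pos (by norm_num : (0:ℝ) < 10) n]
  have h3 : d.term ((d.k:ℤ) - ((d.k:ℤ) - n).toNat) ≤ d.tail d.k := d.tail_le_term _ _
  rw [show ((d.k:ℤ) - ((d.k:ℤ) - n).toNat) = n by omega] at h3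
  have : (0:ℝ) < (10:ℝ)^n := by positivity
  unfold posval
  linarith

/-- core comparison -/
lemma tail_lt_tail (d e : Decimal) (i : ℤ)
    (hlt : d.digits i < e.digits i)
    (heq : ∀ j : ℤ, i < j → d.digits j = e.digits j) :
    ∀ I : ℤ, i ≤ I → d.tail I < e.tail I := by
  refine Int.le_induction (motive := fun I _ => d.tail I < e.tail I) ?_ ?_
  · show d.tail i < e.tail i
    rw [d.tail_succ i, e.tail_succ i]
    have h1 : d.tail (i-1) < (10:ℝ)^((i-1)+1) := d.tail_lt _
    rw [show (i-1)+1 = i by ring] at h1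
    have h2 : (0:ℝ) ≤ e.tail (i-1) := e.tail_nonneg _
    have h3 : (d.digits i : ℝ) + 1 ≤ (e.digits i : ℝ) := by
      have : (d.digits i : ℕ) + 1 ≤ (e.digits i : ℕ) := hlt
      exact_mod_cast this
    have hp : (0:ℝ) < (10:ℝ)^i := by positivity
    unfold term
    nlinarith
  · intro I hI ih
    show d.tail (I+1) < e.tail (I+1)
    rw [d.tail_succ (I+1), e.tail_succ (I+1)]
    have : d.term (I+1) = e.term (I+1) := by
      unfold term; rw [heq (I+1) (by omega)]
    rw [show I + 1 - 1 = I by ring, this]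
    linarith

lemma posval_lt_posval (d e : Decimal) (i : ℤ)
    (hlt : d.digits i < e.digits i)
    (heq : ∀ j : ℤ, i < j → d.digits j = e.digits j) :
    d.posval < e.posval := by
  set I := max i (max (d.k:ℤ) (e.k:ℤ)) with hI
  have h1 : d.tail I = d.posval := d.tail_eq_of_ge (by simp [hI])
  have h2 : e.tail I = e.posval := e.tail_eq_of_ge (by simp [hI])
  rw [← h1, ← h2]
  exact tail_lt_tail d e i hlt heq I (le_max_left _ _)

lemma val_lt_val {d e : Decimal} (h : Decimal.lt d e) : d.val < e.val := by
  unfold val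
  rcases h with ⟨hd, he⟩ | ⟨hd, he, i, hlt, heq⟩ | ⟨hd, he, i, hlt, heq⟩
  · rw [hd, he]
    obtain ⟨n, hn⟩ := d.no_neg_zero hd
    have := d.posval_pos hn
    have := e.posval_nonneg
    rw [if_pos rfl, if_neg Bool.false_ne_true]
    linarith
  · rw [hd, he, if_neg Bool.false_ne_true, if_neg Bool.false_ne_true]
    exact posval_lt_posval d e i hlt heq
  · rw [hd, he, if_pos rfl, if_pos rfl]
    exact neg_lt_neg (posval_lt_posval e d i hlt (fun j hj => (heq j hj).symm))

lemma ext_digits {d e : Decimal} (hneg : d.neg = e.neg)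
    (hdig : ∀ i : ℤ, d.digits i = e.digits i) : d = e := by
  have hdig' : d.digits = e.digits := funext hdig
  have hk : d.k = e.k := by
    by_contra hk
    rcases Nat.lt_or_ge d.k e.k with h | h
    · have h0 : e.digits e.k ≠ 0 := by
        rcases e.leading with h' | h'
        · exact h'
        · omega
      exact h0 (hdig' ▸ d.digits_above e.k (by exact_mod_cast h))
    · have h' : e.k < d.k := by omega
      have h0 : d.digits d.k ≠ 0 := by
        rcases d.leading with h'' | h''
        · exact h''
        · omega
      exact h0 (hdig' ▸ (e.digits_above d.k (by exact_mod_cast h')).symm ▸ rfl)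
  cases d; cases e
  simp_all

lemma total (d e : Decimal) : Decimal.lt d e ∨ d = e ∨ Decimal.lt e d := by
  by_cases hdig : ∀ i : ℤ, d.digits i = e.digits i
  · -- digits agree
    rcases Bool.eq_false_or_eq_true d.neg with hd | hd <;>
    rcases Bool.eq_false_or_eq_true e.neg with he | he
    · right; left; exact ext_digits (hd.trans he.symm) hdig
    · left; exact Or.inl ⟨hd, he⟩
    · right; right; exact Or.inl ⟨he, hd⟩
    · right; left; exact ext_digits (hd.trans he.symm) hdig
  · push_neg at hdig
    -- greatest index where they differ
    have hbdd : ∃ b : ℤ, ∀ z : ℤ, d.digits z ≠ e.digits z → z ≤ b := by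
      refine ⟨max (d.k:ℤ) (e.k:ℤ), fun z hz => ?_⟩
      by_contra h
      push_neg at h
      rw [d.digits_above z (by omega), e.digits_above z (by omega)] at hz
      exact hz rfl
    obtain ⟨i, hi, hgr⟩ := Int.exists_greatest_of_bdd
      (P := fun z => d.digits z ≠ e.digits z) hbdd hdig
    have heq : ∀ j : ℤ, i < j → d.digits j = e.digits j := by
      intro j hj
      by_contra h
      exact absurd (hgr j h) (by omega)
    rcases Bool.eq_false_or_eq_true d.neg with hd | hd <;>
    rcases Bool.eq_false_or_eq_true e.neg with he | he
    · rcases lt_or_gt_of_ne hi with h | h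
      · right; right; right; right
        exact ⟨he, hd, i, h, fun j hj => (heq j hj).symm⟩
      · left; right; right; exact ⟨hd, he, i, h, heq⟩
    · left; exact Or.inl ⟨hd, he⟩
    · right; right; exact Or.inl ⟨he, hd⟩
    · rcases lt_or_gt_of_ne hi with h | h
      · left; right; left; exact ⟨hd, he, i, h, heq⟩
      · right; right; right; left
        exact ⟨he, hd, i, h, fun j hj => (heq j hj).symm⟩

lemma floor_div_ten (x : ℝ) : ⌊x / 10⌋ = ⌊x⌋ / 10 := by
  rw [Int.floor_eq_iff]
  have h1 : ⌊x⌋ ≤ x := Int.floor_le x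
  have h2 : x < ⌊x⌋ + 1 := Int.lt_floor_add_one x
  have h3 : 10 * (⌊x⌋ / 10) ≤ ⌊x⌋ := by omega
  have h4 : ⌊x⌋ + 1 ≤ 10 * (⌊x⌋ / 10) + 10 := by omega
  constructor
  · have : ((10 * (⌊x⌋ / 10) : ℤ) : ℝ) ≤ (⌊x⌋ : ℝ) := by exact_mod_cast h3
    push_cast at this ⊢
    linarith
  · have : ((⌊x⌋ + 1 : ℤ) : ℝ) ≤ ((10 * (⌊x⌋ / 10) + 10 : ℤ) : ℝ) := by exact_mod_cast h4
    push_cast at this ⊢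
    linarith

noncomputable def fl (r : ℝ) (n : ℤ) : ℤ := ⌊r / (10:ℝ)^n⌋

lemma fl_nonneg {r : ℝ} (hr : 0 < r) (n : ℤ) : 0 ≤ fl r n := by
  unfold fl
  apply Int.floor_nonneg.2
  positivity

lemma fl_succ (r : ℝ) (n : ℤ) : fl r (n + 1) = fl r n / 10 := by
  unfold fl
  rw [← floor_div_ten]
  congr 1
  rw [zpow_add_one₀ (by norm_num : (10:ℝ) ≠ 0)]
  ring

lemma fl_rec (r : ℝ) (n : ℤ) : fl r n = 10 * fl r (n + 1) + fl r n % 10 := by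
  rw [fl_succ]; omega

lemma fl_le {r : ℝ} (n : ℤ) : (fl r n : ℝ) * (10:ℝ)^n ≤ r := by
  have h := Int.floor_le (r / (10:ℝ)^n)
  have hp : (0:ℝ) < (10:ℝ)^n := by positivity
  calc (fl r n : ℝ) * (10:ℝ)^n ≤ (r / (10:ℝ)^n) * (10:ℝ)^n := by
        exact mul_le_mul_of_nonneg_right h hp.le
    _ = r := by field_simp

lemma lt_fl {r : ℝ} (n : ℤ) : r < ((fl r n : ℝ) + 1) * (10:ℝ)^n := by
  unfold fl
  have h := Int.lt_floor_add_one (r / (10:ℝ)^n)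
  have hp : (0:ℝ) < (10:ℝ)^n := by positivity
  have := (div_lt_iff₀ hp).1 h
  linarith

noncomputable def dig (r : ℝ) (n : ℤ) : Fin 10 :=
  ⟨(fl r n % 10).toNat, by omega⟩

noncomputable def kk (r : ℝ) : ℕ := Nat.log 10 ⌊r⌋.toNat

lemma r_lt_pow {r : ℝ} (hr : 0 < r) : r < (10:ℝ) ^ ((kk r : ℤ) + 1) := by
  have h1 : ⌊r⌋.toNat < 10 ^ (kk r + 1) := Nat.lt_pow_succ_log_self (by norm_num) _
  have h2 : r < ⌊r⌋ + 1 := Int.lt_floor_add_one r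
  have h3 : ((⌊r⌋.toNat : ℤ)) = ⌊r⌋ := Int.toNat_of_nonneg (Int.floor_nonneg.2 hr.le)
  have h4 : ((⌊r⌋ : ℝ)) + 1 ≤ (((10:ℕ) ^ (kk r + 1) : ℕ) : ℝ) := by
    rw [← h3]
    exact_mod_cast Nat.succ_le_of_lt h1
  have h5 : (((10:ℕ) ^ (kk r + 1) : ℕ) : ℝ) = (10:ℝ) ^ ((kk r : ℤ) + 1) := by
    push_cast
    rw [← zpow_natCast]
    push_cast
    ring
  rw [← h5]
  linarith

lemma pow_le_r {r : ℝ} (hr : 1 ≤ r) : (10:ℝ) ^ ((kk r : ℤ)) ≤ r := by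
  have h0 : 1 ≤ ⌊r⌋.toNat := by
    have : (1:ℤ) ≤ ⌊r⌋ := by exact_mod_cast Int.le_floor.2 (by exact_mod_cast hr)
    omega
  have h1 : 10 ^ (kk r) ≤ ⌊r⌋.toNat := Nat.pow_log_le_self 10 (by omega)
  have h2 : ((⌊r⌋.toNat : ℤ) : ℝ) ≤ r := by
    rw [Int.toNat_of_nonneg (Int.floor_nonneg.2 (by linarith))]
    exact Int.floor_le r
  have : ((10:ℝ))^((kk r : ℤ)) = ((10 ^ (kk r) : ℕ) : ℝ) := by
    push_cast
    rw [← zpow_natCast]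
  rw [this]
  have := h1
  calc ((10 ^ (kk r) : ℕ) : ℝ) ≤ ((⌊r⌋.toNat : ℕ) : ℝ) := by exact_mod_cast h1
    _ ≤ r := by exact_mod_cast h2

lemma fl_eq_zero {r : ℝ} (hr : 0 < r) {n : ℤ} (hn : (kk r : ℤ) < n) : fl r n = 0 := by
  have h1 : r < (10:ℝ)^n := by
    calc r < (10:ℝ)^((kk r : ℤ)+1) := r_lt_pow hr
      _ ≤ (10:ℝ)^n := by
        apply zpow_le_zpow_right₀ (by norm_num) (by omega)
  unfold fl
  rw [Int.floor_eq_zero_iff]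
  constructor
  · positivity
  · rw [div_lt_one (by positivity)]
    exact h1

lemma dig_no_nine {r : ℝ} (hr : 0 < r) (n : ℤ) : ∃ m : ℤ, m ≤ n ∧ dig r m ≠ 9 := by
  by_contra hcon
  push_neg at hcon
  have h9 : ∀ m : ℤ, m ≤ n → fl r m % 10 = 9 := by
    intro m hm
    have := hcon m hm
    have h' : (fl r m % 10).toNat = 9 := by
      have := congrArg Fin.val this
      simpa [dig] using this
    omega
  set F : ℤ := fl r (n + 1) with hF
  have claim : ∀ j : ℕ, fl r (n - j) + 1 = 10 ^ (j + 1) * (F + 1) := by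
    intro j
    induction j with
    | zero =>
      have h1 := fl_rec r n
      have h2 := h9 n le_rfl
      simp only [Nat.cast_zero, sub_zero]
      rw [hF]
      norm_num
      omega
    | succ j ih =>
      have h1 := fl_rec r (n - (j+1 : ℕ))
      have he : (n - (j+1 : ℕ) + 1 : ℤ) = n - j := by push_cast; ring
      rw [he] at h1
      have h2 := h9 (n - (j+1 : ℕ)) (by push_cast; omega)
      have h3 : fl r (n - (j+1:ℕ)) = 10 * fl r (n - j) + 9 := by omega
      rw [h3]
      linear_combination 10 * ih
  -- real consequences
  set C : ℝ := ((F : ℝ) + 1) * (10:ℝ) ^ (n + 1) with hC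
  have hrC : r < C := lt_fl (n + 1)
  have hbound : ∀ j : ℕ, C - (10:ℝ) ^ (n - (j:ℤ)) ≤ r := by
    intro j
    have h1 : ((fl r (n - j) : ℝ)) * (10:ℝ) ^ (n - (j:ℤ)) ≤ r := fl_le _
    have h2 : ((fl r (n - j) : ℝ)) + 1 = (10:ℝ) ^ (j + 1 : ℕ) * ((F:ℝ) + 1) := by
      exact_mod_cast claim j
    have h3 : (10:ℝ) ^ (j + 1 : ℕ) * (10:ℝ) ^ (n - (j:ℤ)) = (10:ℝ) ^ (n + 1) := by
      rw [← zpow_natCast (10:ℝ) (j+1), ← zpow_add₀ (by norm_num : (10:ℝ) ≠ 0)]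
      congr 1
      push_cast
      ring
    have h4 : ((fl r (n - j) : ℝ)) * (10:ℝ) ^ (n - (j:ℤ))
        = ((F:ℝ) + 1) * (10:ℝ) ^ (n + 1) - (10:ℝ) ^ (n - (j:ℤ)) := by
      linear_combination (10:ℝ) ^ (n - (j:ℤ)) * h2 + ((F:ℝ) + 1) * h3
    rw [hC]
    linarith [h1, h4.ge, h4.le]
  -- choose j making 10^(n-j) small
  have hpos : 0 < (C - r) / (10:ℝ)^n := by
    have : (0:ℝ) < (10:ℝ)^n := by positivity
    have := sub_pos.2 hrC
    positivity
  obtain ⟨j, hj⟩ := exists_pow_lt_of_lt_one hpos (by norm_num : (1/10 : ℝ) < 1)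
  have hsmall : (10:ℝ) ^ (n - (j:ℤ)) < C - r := by
    have h1 : (10:ℝ) ^ (n - (j:ℤ)) = (10:ℝ)^n * (1/10)^j := by
      rw [zpow_sub₀ (by norm_num : (10:ℝ) ≠ 0), zpow_natCast]
      field_simp
      rw [← mul_pow]; norm_num
    rw [h1]
    have h2 : (0:ℝ) < (10:ℝ)^n := by positivity
    calc (10:ℝ)^n * (1/10)^j < (10:ℝ)^n * ((C - r)/(10:ℝ)^n) := by
          exact mul_lt_mul_of_pos_left hj h2
      _ = C - r := by field_simp
  linarith [hbound j]

noncomputable def fromRealPos (r : ℝ) (hr : 0 < r) : Decimal where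
  neg := false
  k := kk r
  digits := dig r
  digits_above := fun n hn => by
    have h0 : fl r n = 0 := fl_eq_zero hr hn
    unfold dig
    apply Fin.ext
    simp [h0]
  leading := by
    by_cases hk : kk r = 0
    · right; exact hk
    · left
      have h10 : 10 ≤ ⌊r⌋.toNat := by
        by_contra h
        push_neg at h
        have : Nat.log 10 ⌊r⌋.toNat = 0 := Nat.log_eq_zero_iff.2 (Or.inl h)
        exact hk this
      have hr1 : (1:ℝ) ≤ r := by
        have h1 : ((10:ℤ) : ℝ) ≤ ((⌊r⌋.toNat : ℤ) : ℝ) := by exact_mod_cast h10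
        rw [Int.toNat_of_nonneg (Int.floor_nonneg.2 hr.le)] at h1
        push_cast at h1
        have := Int.floor_le r
        linarith
      have hp : (0:ℝ) < (10:ℝ)^((kk r : ℤ)) := by positivity
      have h1 : 1 ≤ fl r (kk r) := by
        unfold fl
        apply Int.le_floor.2
        rw [le_div_iff₀ hp]
        have := pow_le_r hr1
        push_cast
        linarith
      have h2 : fl r (kk r) < 10 := by
        unfold fl
        apply Int.floor_lt.2
        rw [div_lt_iff₀ hp]
        have := r_lt_pow hr
        rw [zpow_add_one₀ (by norm_num : (10:ℝ) ≠ 0)] at this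
        push_cast
        linarith
      unfold dig
      intro hcon
      have := congrArg Fin.val hcon
      simp at this
      omega
  no_nine_tail := dig_no_nine hr
  no_neg_zero := fun h => absurd h (by simp)

lemma dig_cast (r : ℝ) (n : ℤ) : ((dig r n : ℕ) : ℝ) = ((fl r n % 10 : ℤ) : ℝ) := by
  unfold dig
  simp only []
  exact_mod_cast congrArg (fun z : ℤ => (z : ℝ))
    (Int.toNat_of_nonneg (by omega : (0:ℤ) ≤ fl r n % 10))

lemma partial_sum {r : ℝ} (hr : 0 < r) (N : ℕ) :
    ∑ j ∈ Finset.range N, (fromRealPos r hr).term ((kk r : ℤ) - j)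
      = (fl r ((kk r : ℤ) + 1 - N) : ℝ) * (10:ℝ) ^ ((kk r : ℤ) + 1 - N) := by
  induction N with
  | zero =>
    simp only [Finset.range_zero, Finset.sum_empty, Nat.cast_zero, sub_zero]
    rw [fl_eq_zero hr (by omega)]
    simp
  | succ N ih =>
    rw [Finset.sum_range_succ, ih]
    have hm : (kk r : ℤ) - N = (kk r : ℤ) + 1 - (N+1:ℕ) := by push_cast; ring
    have hterm : (fromRealPos r hr).term ((kk r : ℤ) - N)
        = ((fl r ((kk r : ℤ) - N) % 10 : ℤ) : ℝ) * (10:ℝ) ^ ((kk r : ℤ) - N) := by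
      unfold term
      rw [show (fromRealPos r hr).digits = dig r from rfl, dig_cast]
    rw [hterm, ← hm]
    have hrec : ((fl r ((kk r : ℤ) - N) : ℤ) : ℝ)
        = 10 * ((fl r ((kk r : ℤ) + 1 - N) : ℤ) : ℝ)
          + ((fl r ((kk r : ℤ) - N) % 10 : ℤ) : ℝ) := by
      have := fl_rec r ((kk r : ℤ) - N)
      rw [show (kk r : ℤ) - N + 1 = (kk r : ℤ) + 1 - N by ring] at this
      exact_mod_cast this
    have hzp : (10:ℝ) ^ ((kk r : ℤ) + 1 - N) = 10 * (10:ℝ) ^ ((kk r : ℤ) - N) := by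
      rw [show (kk r : ℤ) + 1 - N = ((kk r : ℤ) - N) + 1 by ring,
        zpow_add_one₀ (by norm_num : (10:ℝ) ≠ 0)]
      ring
    rw [hzp]
    linear_combination (-((10:ℝ) ^ ((kk r : ℤ) - N))) * hrec

lemma posval_fromRealPos {r : ℝ} (hr : 0 < r) : (fromRealPos r hr).posval = r := by
  have hk : ((fromRealPos r hr).k : ℤ) = (kk r : ℤ) := rfl
  have hsum : HasSum (fun j : ℕ => (fromRealPos r hr).term ((kk r : ℤ) - j)) r := by
    rw [hasSum_iff_tendsto_nat_of_nonneg (fun j => term_nonneg _ _)]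
    have key : ∀ N : ℕ, |(∑ j ∈ Finset.range N, (fromRealPos r hr).term ((kk r : ℤ) - j)) - r|
        ≤ (10:ℝ) ^ ((kk r : ℤ) + 1) * (1/10 : ℝ)^N := by
      intro N
      rw [partial_sum hr N]
      set m : ℤ := (kk r : ℤ) + 1 - N with hm
      have h1 : (fl r m : ℝ) * (10:ℝ)^m ≤ r := fl_le _
      have h2 : r < ((fl r m : ℝ) + 1) * (10:ℝ)^m := lt_fl _
      have h3 : (10:ℝ)^m = (10:ℝ) ^ ((kk r : ℤ) + 1) * (1/10:ℝ)^N := by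
        rw [hm, zpow_sub₀ (by norm_num : (10:ℝ) ≠ 0), zpow_natCast]
        field_simp
        rw [← mul_pow]; norm_num
      rw [abs_le]
      constructor
      · nlinarith [zpow_pos (by norm_num : (0:ℝ) < 10) m]
      · nlinarith [zpow_pos (by norm_num : (0:ℝ) < 10) m]
    have hten : Filter.Tendsto (fun N : ℕ => (10:ℝ) ^ ((kk r : ℤ) + 1) * (1/10 : ℝ)^N)
        Filter.atTop (nhds 0) := by
      have := tendsto_pow_atTop_nhds_zero_of_lt_one (by norm_num : (0:ℝ) ≤ 1/10)
        (by norm_num : (1/10 : ℝ) < 1)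
      simpa using this.const_mul ((10:ℝ) ^ ((kk r : ℤ) + 1))
    have hz : Filter.Tendsto (fun N : ℕ =>
        (∑ j ∈ Finset.range N, (fromRealPos r hr).term ((kk r : ℤ) - j)) - r)
        Filter.atTop (nhds 0) := by
      apply squeeze_zero_norm key hten
    have := hz.add_const r
    simpa using this
  unfold posval tail
  rw [hk]
  exact hsum.tsum_eq

lemma posval_eq_zero {d : Decimal} (h : ∀ n : ℤ, d.digits n = 0) : d.posval = 0 := by
  unfold posval tail
  have : ∀ j : ℕ, d.term ((d.k : ℤ) - j) = 0 := by
    intro j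
    unfold term
    rw [h]
    simp
  rw [tsum_congr this]
  exact tsum_zero

noncomputable def zeroDec : Decimal where
  neg := false
  k := 0
  digits := fun _ => 0
  digits_above := fun _ _ => rfl
  leading := Or.inr rfl
  no_nine_tail := fun n => ⟨n, le_rfl, show (0 : Fin 10) ≠ 9 by decide⟩
  no_neg_zero := fun h => absurd h (by simp)

lemma val_surjective (r : ℝ) : ∃ d : Decimal, d.val = r := by
  rcases lt_trichotomy r 0 with hr | hr | hr
  · have hr' : 0 < -r := by linarith
    set p := fromRealPos (-r) hr' with hp
    have hnz : ∃ n : ℤ, p.digits n ≠ 0 := by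
      by_contra h
      push_neg at h
      have := posval_eq_zero h
      rw [posval_fromRealPos hr'] at this
      linarith
    refine ⟨⟨true, p.k, p.digits, p.digits_above, p.leading, p.no_nine_tail,
      fun _ => hnz⟩, ?_⟩
    have hpv : (Decimal.mk true p.k p.digits p.digits_above p.leading p.no_nine_tail
        (fun _ => hnz)).posval = p.posval := rfl
    rw [val, if_pos rfl, hpv, posval_fromRealPos hr']
    ring
  · refine ⟨zeroDec, ?_⟩
    rw [val, if_neg (by simp [zeroDec]), posval_eq_zero (fun _ => rfl), hr]
  · refine ⟨fromRealPos r hr, ?_⟩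
    rw [val, if_neg (by simp [fromRealPos]), posval_fromRealPos hr]

end Decimal

/-- In the linear order of infinite decimal expansions, every nonempty set
bounded from above has a supremum (a least upper bound). -/
theorem decimal_supremum (U : Set Decimal) (hne : U.Nonempty)
    (hbd : ∃ b : Decimal, ∀ u ∈ U, Decimal.lt u b ∨ u = b) :
    ∃ s : Decimal, (∀ u ∈ U, Decimal.lt u s ∨ u = s) ∧
      ∀ b : Decimal, (∀ u ∈ U, Decimal.lt u b ∨ u = b) → Decimal.lt s b ∨ s = b := by
  obtain ⟨b, hb⟩ := hbd
  set V : Set ℝ := Decimal.val '' U with hV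
  have hVne : V.Nonempty := hne.image _
  have hVbdd : BddAbove V := by
    refine ⟨b.val, fun v hv => ?_⟩
    obtain ⟨u, hu, rfl⟩ := hv
    rcases hb u hu with h | rfl
    · exact (Decimal.val_lt_val h).le
    · exact le_rfl
  set L : ℝ := sSup V with hL
  obtain ⟨s, hs⟩ := Decimal.val_surjective L
  refine ⟨s, ?_, ?_⟩
  · intro u hu
    have h1 : u.val ≤ s.val := by
      rw [hs]
      exact le_csSup hVbdd ⟨u, hu, rfl⟩
    rcases Decimal.total u s with h | h | h
    · exact Or.inl h
    · exact Or.inr h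
    · exact absurd (Decimal.val_lt_val h) (by linarith)
  · intro c hc
    have h1 : s.val ≤ c.val := by
      rw [hs]
      apply csSup_le hVne
      rintro v ⟨u, hu, rfl⟩
      rcases hc u hu with h | rfl
      · exact (Decimal.val_lt_val h).le
      · exact le_rfl
    rcases Decimal.total s c with h | h | h
    · exact Or.inl h
    · exact Or.inr h
    · exact absurd (Decimal.val_lt_val h) (by linarith)
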